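/- arXiv:2602.12693 — 3 statements merged into one kernel-verified Lean document; each statement's English description precedes it below -/
import Mathlib

section
/- Let (X_i, Y_i), i = 1, ..., n+1, be exchangeable random pairs taking values in ℝ^p × ℝ, let f̂ : ℝ^p → ℝ be a fixed measurable function and v : ℝ^p → (0, ∞) a fixed measurable weight function. Define nonconformity scores R_i = |Y_i − f̂(X_i)| · v(X_i) for i = 1, ..., n+1. Let α ∈ (0,1) satisfy ⌈(1−α)(n+1)⌉ ≤ n, and let q̂ be the ⌈(1−α)(n+1)⌉-th smallest value among R_1, ..., R_n. Then P(Y_{n+1} ∈ [f̂(X_{n+1}) − q̂/v(X_{n+1}), f̂(X_{n+1}) + q̂/v(X_{n+1})]) ≥ 1 − α; equivalently P(R_{n+1} ≤ q̂) ≥ 1 − α. -/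
open MeasureTheory Matrix

/-- The `k`-th smallest value among `R 0, …, R (n-1)` (1-indexed: `k = 1` gives the
minimum), defined as the least `t` such that at least `k` of the values are `≤ t`. -/
noncomputable def kthSmallest {n : ℕ} (R : Fin n → ℝ) (k : ℕ) : ℝ :=
  sInf {t : ℝ | k ≤ (Finset.univ.filter (fun i => R i ≤ t)).card}

lemma kthSmallest_mem {n : ℕ} (R : Fin n → ℝ) (k : ℕ) (hk1 : 1 ≤ k) (hkn : k ≤ n) :
    k ≤ (Finset.univ.filter (fun i => R i ≤ kthSmallest R k)).card := by
  classical
  have hn : 0 < n := lt_of_lt_of_le hk1 hkn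
  have hne : (Finset.univ : Finset (Fin n)).Nonempty := by
    simp [Finset.univ_nonempty_iff, ← Fin.pos_iff_nonempty, hn]
  set S : Set ℝ := {t : ℝ | k ≤ (Finset.univ.filter (fun i => R i ≤ t)).card} with hS
  have hSne : S.Nonempty := by
    refine ⟨Finset.univ.sup' hne R, ?_⟩
    have h1 : Finset.univ.filter (fun i => R i ≤ Finset.univ.sup' hne R) = Finset.univ :=
      Finset.filter_true_of_mem fun i _ => Finset.le_sup' R (Finset.mem_univ i)
    show k ≤ (Finset.univ.filter (fun i => R i ≤ Finset.univ.sup' hne R)).card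
    rw [h1, Finset.card_univ, Fintype.card_fin]
    exact hkn
  have hq : kthSmallest R k = sInf S := rfl
  by_contra hcon
  push_neg at hcon
  set q := kthSmallest R k with hqdef
  set T := Finset.univ.filter (fun i => q < R i) with hT
  have hcards : (Finset.univ.filter (fun i => R i ≤ q)).card + T.card = n := by
    have := Finset.card_filter_add_card_filter_not
      (s := (Finset.univ : Finset (Fin n))) (p := fun i => R i ≤ q)
    simpa [hT, not_le, Finset.card_univ] using this
  have hTne : T.Nonempty := by
    rw [← Finset.card_pos]; omega
  set m := T.inf' hTne R with hm
  have hqm : q < m := by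
    rw [hm, Finset.lt_inf'_iff]
    intro i hi
    simpa [hT] using (Finset.mem_filter.mp hi).2
  have hclaim : ∀ t ∈ S, m ≤ t := by
    intro t ht
    by_contra hlt
    push_neg at hlt
    have hsub : Finset.univ.filter (fun i => R i ≤ t) ⊆ Finset.univ.filter (fun i => R i ≤ q) := by
      intro i hi
      simp only [Finset.mem_filter, Finset.mem_univ, true_and] at hi ⊢
      rcases le_or_gt (R i) q with h | h
      · exact h
      · exfalso
        have hiT : i ∈ T := by simp [hT, h]
        have := Finset.inf'_le R hiT
        linarith
    have := le_trans ht (Finset.card_le_card hsub)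
    omega
  have : m ≤ q := hq ▸ le_csInf hSne hclaim
  linarith

lemma rank_count_le {n : ℕ} (r : Fin (n+1) → ℝ) (k : ℕ) :
    (Finset.univ.filter
      (fun j => k ≤ (Finset.univ.filter (fun i => r i < r j)).card)).card ≤ n + 1 - k := by
  classical
  set S := Finset.univ.filter
      (fun j => k ≤ (Finset.univ.filter (fun i => r i < r j)).card) with hSdef
  rcases S.eq_empty_or_nonempty with h | h
  · simp [h]
  · obtain ⟨j0, hj0S, hj0min⟩ := S.exists_min_image r h
    have hj0 : k ≤ (Finset.univ.filter (fun i => r i < r j0)).card := by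
      have := Finset.mem_filter.mp hj0S
      exact this.2
    have hsub : (Finset.univ.filter (fun i => r i < r j0)) ⊆ Finset.univ \ S := by
      intro i hi
      simp only [Finset.mem_filter, Finset.mem_univ, true_and] at hi
      simp only [Finset.mem_sdiff, Finset.mem_univ, true_and]
      intro hiS
      exact absurd (hj0min i hiS) (not_le.mpr hi)
    have h2 : k ≤ (Finset.univ \ S).card := le_trans hj0 (Finset.card_le_card hsub)
    have h3 : (Finset.univ \ S).card = (n+1) - S.card := by
      rw [Finset.card_sdiff_of_subset (Finset.subset_univ S), Finset.card_univ, Fintype.card_fin]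
    have h4 : S.card ≤ n+1 := by
      have := Finset.card_le_card (Finset.subset_univ S)
      simpa using this
    omega

/-- **Marginal coverage of weighted split conformal prediction (lower bound).**
For exchangeable pairs `(X_i, Y_i)`, `i = 1, …, n+1`, any fixed measurable predictor `f̂`
and fixed measurable positive weight `v`, scores `R_i = |Y_i − f̂(X_i)|·v(X_i)`, and
`q̂` the `⌈(1−α)(n+1)⌉`-th smallest of `R_1, …, R_n`, the prediction interval
`[f̂(X_{n+1}) − q̂/v(X_{n+1}), f̂(X_{n+1}) + q̂/v(X_{n+1})]` covers `Y_{n+1}` with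
probability at least `1 − α`; equivalently `P(R_{n+1} ≤ q̂) ≥ 1 − α`. -/
theorem lwcp_marginal_coverage_lower
    {Ω : Type*} [MeasurableSpace Ω] (P : Measure Ω) [IsProbabilityMeasure P]
    (p n : ℕ)
    (Z : Fin (n + 1) → Ω → (Fin p → ℝ) × ℝ)
    (hZmeas : ∀ i, Measurable (Z i))
    (hexch : ∀ π : Equiv.Perm (Fin (n + 1)),
      Measure.map (fun ω => fun i => Z (π i) ω) P
        = Measure.map (fun ω => fun i => Z i ω) P)
    (fhat : (Fin p → ℝ) → ℝ) (hf : Measurable fhat)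
    (v : (Fin p → ℝ) → ℝ) (hv : Measurable v) (hvpos : ∀ x, 0 < v x)
    (α : ℝ) (hα : α ∈ Set.Ioo (0 : ℝ) 1)
    (hk : ⌈(1 - α) * ((n : ℝ) + 1)⌉₊ ≤ n)
    (R : Fin (n + 1) → Ω → ℝ)
    (hR : ∀ i ω, R i ω = |(Z i ω).2 - fhat (Z i ω).1| * v (Z i ω).1)
    (qhat : Ω → ℝ)
    (hq : ∀ ω, qhat ω =
      kthSmallest (fun i : Fin n => R i.castSucc ω) ⌈(1 - α) * ((n : ℝ) + 1)⌉₊) :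
    ENNReal.ofReal (1 - α)
        ≤ P {ω | (Z (Fin.last n) ω).2 ∈
            Set.Icc (fhat (Z (Fin.last n) ω).1 - qhat ω / v (Z (Fin.last n) ω).1)
                    (fhat (Z (Fin.last n) ω).1 + qhat ω / v (Z (Fin.last n) ω).1)}
      ∧ ENNReal.ofReal (1 - α) ≤ P {ω | R (Fin.last n) ω ≤ qhat ω} := by
  classical
  obtain ⟨hα0, hα1⟩ := hα
  set k : ℕ := ⌈(1 - α) * ((n : ℝ) + 1)⌉₊ with hkdef
  have hk1 : 1 ≤ k := by
    rw [hkdef]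
    exact Nat.one_le_iff_ne_zero.mpr (Nat.ceil_pos.mpr (mul_pos (by linarith) (by positivity))).ne'
  -- the score function
  set g : (Fin p → ℝ) × ℝ → ℝ := fun z => |z.2 - fhat z.1| * v z.1 with hg
  have hgmeas : Measurable g :=
    ((measurable_snd.sub (hf.comp measurable_fst)).abs).mul (hv.comp measurable_fst)
  have hReq : ∀ i, R i = fun ω => g (Z i ω) := fun i => funext fun ω => hR i ω
  have hRmeas : ∀ i, Measurable (R i) := fun i => (hReq i) ▸ (hgmeas.comp (hZmeas i))
  -- the "bad rank" events
  set A : Fin (n+1) → Set Ω :=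
    fun j => {ω | k ≤ (Finset.univ.filter (fun i => R i ω < R j ω)).card} with hA
  have hAmeas : ∀ j, MeasurableSet (A j) := by
    intro j
    have hN : Measurable (fun ω => (Finset.univ.filter (fun i => R i ω < R j ω)).card) := by
      have : (fun ω => (Finset.univ.filter (fun i => R i ω < R j ω)).card)
          = fun ω => ∑ i : Fin (n+1), if R i ω < R j ω then 1 else 0 := by
        funext ω
        rw [Finset.card_filter]
      rw [this]
      exact Finset.measurable_sum _ fun i _ =>
        Measurable.ite (measurableSet_lt (hRmeas i) (hRmeas j)) measurable_const measurable_const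
    exact hN (MeasurableSet.of_discrete (s := Set.Ici k))
  -- equal probabilities via exchangeability
  set B : Set (Fin (n+1) → ℝ) :=
    {r | k ≤ (Finset.univ.filter (fun i => r i < r (Fin.last n))).card} with hB
  have hBmeas : MeasurableSet B := by
    have hN : Measurable (fun r : Fin (n+1) → ℝ =>
        (Finset.univ.filter (fun i => r i < r (Fin.last n))).card) := by
      have : (fun r : Fin (n+1) → ℝ =>
          (Finset.univ.filter (fun i => r i < r (Fin.last n))).card)
          = fun r => ∑ i : Fin (n+1), if r i < r (Fin.last n) then 1 else 0 := by
        funext r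
        rw [Finset.card_filter]
      rw [this]
      exact Finset.measurable_sum _ fun i _ =>
        Measurable.ite (measurableSet_lt (measurable_pi_apply i)
          (measurable_pi_apply (Fin.last n))) measurable_const measurable_const
    exact hN (MeasurableSet.of_discrete (s := Set.Ici k))
  have hG : Measurable (fun w : Fin (n+1) → (Fin p → ℝ) × ℝ => fun i => g (w i)) :=
    measurable_pi_lambda _ fun i => hgmeas.comp (measurable_pi_apply i)
  have hAeq : ∀ j, P (A j) = P (A (Fin.last n)) := by
    intro j
    set π : Equiv.Perm (Fin (n+1)) := Equiv.swap (Fin.last n) j with hπ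
    have hZv : Measurable (fun ω => fun i => Z i ω) :=
      measurable_pi_lambda _ fun i => hZmeas i
    have hZvπ : Measurable (fun ω => fun i => Z (π i) ω) :=
      measurable_pi_lambda _ fun i => hZmeas (π i)
    have hmap : Measure.map (fun ω => fun i => g (Z (π i) ω)) P
        = Measure.map (fun ω => fun i => g (Z i ω)) P := by
      calc Measure.map (fun ω => fun i => g (Z (π i) ω)) P
          = Measure.map ((fun w : Fin (n+1) → (Fin p → ℝ) × ℝ => fun i => g (w i))
              ∘ (fun ω => fun i => Z (π i) ω)) P := rfl
        _ = Measure.map (fun w : Fin (n+1) → (Fin p → ℝ) × ℝ => fun i => g (w i))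
              (Measure.map (fun ω => fun i => Z (π i) ω) P) := (Measure.map_map hG hZvπ).symm
        _ = Measure.map (fun w : Fin (n+1) → (Fin p → ℝ) × ℝ => fun i => g (w i))
              (Measure.map (fun ω => fun i => Z i ω) P) := by rw [hexch π]
        _ = Measure.map ((fun w : Fin (n+1) → (Fin p → ℝ) × ℝ => fun i => g (w i))
              ∘ (fun ω => fun i => Z i ω)) P := Measure.map_map hG hZv
        _ = Measure.map (fun ω => fun i => g (Z i ω)) P := rfl
    have hpre1 : (fun ω => fun i => g (Z (π i) ω)) ⁻¹' B = A j := by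
      ext ω
      simp only [hB, hA, Set.mem_preimage, Set.mem_setOf_eq]
      have hπlast : π (Fin.last n) = j := Equiv.swap_apply_left _ _
      have hcard : (Finset.univ.filter (fun i => g (Z (π i) ω) < g (Z (π (Fin.last n)) ω))).card
          = (Finset.univ.filter (fun i => R i ω < R j ω)).card := by
        rw [hπlast]
        refine Finset.card_equiv π (fun i => ?_)
        simp only [Finset.mem_filter, Finset.mem_univ, true_and, hR, hg]
      rw [hcard]
    have hpre2 : (fun ω => fun i => g (Z i ω)) ⁻¹' B = A (Fin.last n) := by
      ext ω
      simp only [hB, hA, Set.mem_preimage, Set.mem_setOf_eq, hR, hg]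
    have hmeas1 : Measurable (fun ω => fun i => g (Z (π i) ω)) :=
      measurable_pi_lambda _ fun i => hgmeas.comp (hZmeas (π i))
    have hmeas2 : Measurable (fun ω => fun i => g (Z i ω)) :=
      measurable_pi_lambda _ fun i => hgmeas.comp (hZmeas i)
    calc P (A j) = Measure.map (fun ω => fun i => g (Z (π i) ω)) P B := by
          rw [Measure.map_apply hmeas1 hBmeas, hpre1]
      _ = Measure.map (fun ω => fun i => g (Z i ω)) P B := by rw [hmap]
      _ = P (A (Fin.last n)) := by rw [Measure.map_apply hmeas2 hBmeas, hpre2]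
  -- sum of probabilities bound
  have hsum : (↑(n+1) : ENNReal) * P (A (Fin.last n)) ≤ (↑(n + 1 - k) : ENNReal) := by
    have h1 : (↑(n+1) : ENNReal) * P (A (Fin.last n)) = ∑ j : Fin (n+1), P (A j) := by
      rw [Finset.sum_congr rfl (fun j _ => hAeq j)]
      simp [Finset.card_univ, mul_comm]
    rw [h1]
    have h2 : ∑ j : Fin (n+1), P (A j)
        = ∫⁻ ω, ∑ j : Fin (n+1), (A j).indicator (1 : Ω → ENNReal) ω ∂P := by
      rw [lintegral_finset_sum _ (fun j _ => (measurable_one.indicator (hAmeas j)))]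
      exact Finset.sum_congr rfl fun j _ => (lintegral_indicator_one (hAmeas j)).symm
    rw [h2]
    calc ∫⁻ ω, ∑ j : Fin (n+1), (A j).indicator (1 : Ω → ENNReal) ω ∂P
        ≤ ∫⁻ _, (↑(n + 1 - k) : ENNReal) ∂P := by
          refine lintegral_mono fun ω => ?_
          have hptw : ∑ j : Fin (n+1), (A j).indicator (1 : Ω → ENNReal) ω
              = ((Finset.univ.filter (fun j : Fin (n+1) => ω ∈ A j)).card : ENNReal) := by
            rw [Finset.card_filter]
            push_cast
            exact Finset.sum_congr rfl fun j _ => by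
              by_cases h : ω ∈ A j <;> simp [Set.indicator, h]
          rw [hptw]
          have := rank_count_le (fun i => R i ω) k
          exact (Nat.cast_le (α := ENNReal)).mpr this
      _ = (↑(n + 1 - k) : ENNReal) := by simp
  have hklast : P (A (Fin.last n)) ≤ ENNReal.ofReal α := by
    have hkreal : (1 - α) * ((n : ℝ) + 1) ≤ k := by
      rw [hkdef]; exact Nat.le_ceil _
    have hkn1 : k ≤ n + 1 := le_trans hk (Nat.le_succ n)
    have hreal : ((n + 1 - k : ℕ) : ℝ) ≤ α * ((n:ℝ) + 1) := by
      rw [Nat.cast_sub hkn1]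
      push_cast
      nlinarith
    have h5 : (↑(n + 1 - k) : ENNReal) ≤ ENNReal.ofReal α * (↑(n+1) : ENNReal) := by
      rw [← ENNReal.ofReal_natCast (n+1-k), ← ENNReal.ofReal_natCast (n+1),
        ← ENNReal.ofReal_mul hα0.le]
      exact ENNReal.ofReal_le_ofReal (by push_cast at hreal ⊢; linarith)
    have h6 := le_trans hsum h5
    rw [mul_comm (ENNReal.ofReal α) _] at h6
    exact (ENNReal.mul_le_mul_iff_right (by simp) (by simp)).mp h6
  -- coverage of the residual event
  have hsub : (A (Fin.last n))ᶜ ⊆ {ω | R (Fin.last n) ω ≤ qhat ω} := by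
    intro ω hω
    simp only [hA, Set.mem_compl_iff, Set.mem_setOf_eq, not_le] at hω
    simp only [Set.mem_setOf_eq]
    by_contra hgt
    push_neg at hgt
    have hmem := kthSmallest_mem (fun i : Fin n => R i.castSucc ω) k hk1 hk
    rw [hq ω] at hgt
    have hinj : ∀ i ∈ Finset.univ.filter
        (fun i : Fin n => R i.castSucc ω ≤ kthSmallest (fun i : Fin n => R i.castSucc ω) k),
        (i.castSucc : Fin (n+1)) ∈ Finset.univ.filter
          (fun i : Fin (n+1) => R i ω < R (Fin.last n) ω) := by
      intro i hi
      simp only [Finset.mem_filter, Finset.mem_univ, true_and] at hi ⊢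
      calc R i.castSucc ω ≤ _ := hi
        _ < R (Fin.last n) ω := hgt
    have hcard := Finset.card_le_card_of_injOn _ hinj
      (fun a _ b _ hab => Fin.castSucc_injective n hab)
    beta_reduce at hmem
    exact absurd (le_trans hmem hcard) (not_le.mpr hω)
  have hcov : ENNReal.ofReal (1 - α) ≤ P {ω | R (Fin.last n) ω ≤ qhat ω} := by
    have h7 : P ((A (Fin.last n))ᶜ) = 1 - P (A (Fin.last n)) := by
      rw [measure_compl (hAmeas _) (measure_ne_top P _), measure_univ]
    have h8 : ENNReal.ofReal (1 - α) ≤ P ((A (Fin.last n))ᶜ) := by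
      rw [h7]
      calc ENNReal.ofReal (1 - α) = ENNReal.ofReal 1 - ENNReal.ofReal α :=
            ENNReal.ofReal_sub 1 hα0.le
        _ = 1 - ENNReal.ofReal α := by rw [ENNReal.ofReal_one]
        _ ≤ 1 - P (A (Fin.last n)) := tsub_le_tsub_left hklast 1
    exact le_trans h8 (measure_mono hsub)
  refine ⟨?_, hcov⟩
  have hseteq : {ω | (Z (Fin.last n) ω).2 ∈
      Set.Icc (fhat (Z (Fin.last n) ω).1 - qhat ω / v (Z (Fin.last n) ω).1)
              (fhat (Z (Fin.last n) ω).1 + qhat ω / v (Z (Fin.last n) ω).1)}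
      = {ω | R (Fin.last n) ω ≤ qhat ω} := by
    ext ω
    simp only [Set.mem_setOf_eq, Set.mem_Icc, hR]
    set X := (Z (Fin.last n) ω).1
    set Y := (Z (Fin.last n) ω).2
    have hvX : 0 < v X := hvpos X
    rw [← le_div_iff₀ hvX, abs_le]
    constructor
    · rintro ⟨h1, h2⟩
      constructor <;> linarith
    · rintro ⟨h1, h2⟩
      constructor <;> linarith
  rw [hseteq]
  exact hcov
end

section
/- Let (X_i, Y_i), i = 1, ..., n+1, be exchangeable random pairs in ℝ^p × ℝ, let f̂ : ℝ^p → ℝ and v : ℝ^p → (0, ∞) be fixed measurable functions, define R_i = |Y_i − f̂(X_i)| · v(X_i), let α ∈ (0,1) satisfy ⌈(1−α)(n+1)⌉ ≤ n, and let q̂ be the ⌈(1−α)(n+1)⌉-th smallest value among R_1, ..., R_n. If in addition the scores R_1, ..., R_{n+1} are almost surely pairwise distinct, then P(R_{n+1} ≤ q̂) ≤ 1 − α + 1/(n+1). -/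
open MeasureTheory
open scoped ENNReal NNReal

open MeasureTheory


lemma le_kthSmallest_iff {n k : ℕ} (r : Fin n → ℝ) (hk1 : 1 ≤ k) (hkn : k ≤ n) (x : ℝ) :
    x ≤ kthSmallest r k ↔ (Finset.univ.filter (fun i => r i < x)).card < k := by
  have hn : 0 < n := lt_of_lt_of_le hk1 hkn
  have hne : (Finset.univ : Finset (Fin n)).Nonempty := by
    haveI : Nonempty (Fin n) := Fin.pos_iff_nonempty.mp hn
    exact Finset.univ_nonempty
  set S : Set ℝ := {t : ℝ | k ≤ (Finset.univ.filter (fun i => r i ≤ t)).card} with hS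
  have hSne : S.Nonempty := by
    refine ⟨Finset.univ.sup' hne r, ?_⟩
    have : Finset.univ.filter (fun i => r i ≤ Finset.univ.sup' hne r) = Finset.univ := by
      apply Finset.filter_true_of_mem
      intro i _
      exact Finset.le_sup' r (Finset.mem_univ i)
    rw [hS]
    simp only [Set.mem_setOf_eq]
    rw [this, Finset.card_univ, Fintype.card_fin]
    exact hkn
  have hSbdd : BddBelow S := by
    refine ⟨Finset.univ.inf' hne r, ?_⟩
    intro t ht
    have hcard : 1 ≤ (Finset.univ.filter (fun i => r i ≤ t)).card := le_trans hk1 ht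
    obtain ⟨i, hi⟩ := Finset.card_pos.mp hcard
    have := (Finset.mem_filter.mp hi).2
    exact le_trans (Finset.inf'_le r (Finset.mem_univ i)) this
  constructor
  · intro hx
    by_contra hm
    push_neg at hm
    have hF : (Finset.univ.filter (fun i => r i < x)).Nonempty :=
      Finset.card_pos.mp (lt_of_lt_of_le hk1 hm)
    set t := (Finset.univ.filter (fun i => r i < x)).sup' hF r with ht
    have htS : t ∈ S := by
      refine le_trans hm (Finset.card_le_card ?_)
      intro i hi
      have := Finset.le_sup' r hi
      exact Finset.mem_filter.mpr ⟨Finset.mem_univ i, this⟩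
    have htx : t < x := by
      rw [ht, Finset.sup'_lt_iff]
      intro i hi
      exact (Finset.mem_filter.mp hi).2
    exact absurd (le_trans hx (csInf_le hSbdd htS)) (not_le.mpr htx)
  · intro hm
    refine le_csInf hSne ?_
    intro t ht
    by_contra hxt
    push_neg at hxt
    have hsub : Finset.univ.filter (fun i => r i ≤ t) ⊆ Finset.univ.filter (fun i => r i < x) := by
      intro i hi
      exact Finset.mem_filter.mpr ⟨Finset.mem_univ i,
        lt_of_le_of_lt (Finset.mem_filter.mp hi).2 hxt⟩
    exact absurd (le_trans ht (Finset.card_le_card hsub)) (not_le.mpr hm)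

lemma rank_count {m k : ℕ} (f : Fin m → ℝ) (hf : Function.Injective f) (hkm : k ≤ m) :
    (Finset.univ.filter (fun j : Fin m =>
      (Finset.univ.filter (fun i => f i < f j)).card < k)).card = k := by
  -- the rank function
  have hrank_lt : ∀ j : Fin m, (Finset.univ.filter (fun i => f i < f j)).card < m := by
    intro j
    have : Finset.univ.filter (fun i => f i < f j) ⊆ Finset.univ.erase j := by
      intro i hi
      refine Finset.mem_erase.mpr ⟨?_, Finset.mem_univ i⟩
      intro h; subst h; exact absurd (Finset.mem_filter.mp hi).2 (lt_irrefl _)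
    calc (Finset.univ.filter (fun i => f i < f j)).card
        ≤ (Finset.univ.erase j).card := Finset.card_le_card this
      _ < m := by
          rw [Finset.card_erase_of_mem (Finset.mem_univ j), Finset.card_univ, Fintype.card_fin]
          have hm0 : 0 < m := Fin.pos j
          omega
  set s : Fin m → Fin m := fun j => ⟨(Finset.univ.filter (fun i => f i < f j)).card, hrank_lt j⟩
    with hs
  have hsinj : Function.Injective s := by
    intro j j' h
    by_contra hne
    have hfne : f j ≠ f j' := fun hh => hne (hf hh)
    -- wlog
    have key : ∀ a b : Fin m, f a < f b → (s a : ℕ) < (s b : ℕ) := by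
      intro a b hab
      have hsub : Finset.univ.filter (fun i => f i < f a) ⊆
          Finset.univ.filter (fun i => f i < f b) := by
        intro i hi
        exact Finset.mem_filter.mpr ⟨Finset.mem_univ i,
          lt_trans (Finset.mem_filter.mp hi).2 hab⟩
      have hmem : a ∈ Finset.univ.filter (fun i => f i < f b) :=
        Finset.mem_filter.mpr ⟨Finset.mem_univ a, hab⟩
      have hnm : a ∉ Finset.univ.filter (fun i => f i < f a) := by
        intro hh; exact absurd (Finset.mem_filter.mp hh).2 (lt_irrefl _)
      exact Finset.card_lt_card (Finset.ssubset_iff_of_subset hsub |>.mpr ⟨a, hmem, hnm⟩)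
    rcases lt_or_gt_of_ne hfne with hlt | hgt
    · have := key _ _ hlt; rw [h] at this; exact absurd this (lt_irrefl _)
    · have := key _ _ hgt; rw [h] at this; exact absurd this (lt_irrefl _)
  have hsbij : Function.Bijective s := Finite.injective_iff_bijective.mp hsinj
  -- count
  have : (Finset.univ.filter (fun j : Fin m => (s j : ℕ) < k)).card
      = (Finset.univ.filter (fun j : Fin m => (j : ℕ) < k)).card := by
    apply Finset.card_bij (fun j _ => s j)
    · intro a ha
      exact Finset.mem_filter.mpr ⟨Finset.mem_univ _, (Finset.mem_filter.mp ha).2⟩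
    · intro a _ b _ h; exact hsinj h
    · intro b hb
      obtain ⟨a, ha⟩ := hsbij.2 b
      refine ⟨a, ?_, ha⟩
      refine Finset.mem_filter.mpr ⟨Finset.mem_univ _, ?_⟩
      rw [ha]; exact (Finset.mem_filter.mp hb).2
  have h2 : (Finset.univ.filter (fun j : Fin m => (j : ℕ) < k)).card = k := by
    have hcb : (Finset.univ.filter (fun j : Fin m => (j : ℕ) < k)).card
        = (Finset.range k).card := by
      refine Finset.card_bij (fun j _ => (j : ℕ)) ?_ ?_ ?_
      · intro a ha; exact Finset.mem_range.mpr (Finset.mem_filter.mp ha).2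
      · intro a _ b _ h; exact Fin.ext h
      · intro b hb
        have hbm : b < m := lt_of_lt_of_le (Finset.mem_range.mp hb) hkm
        exact ⟨⟨b, hbm⟩, Finset.mem_filter.mpr ⟨Finset.mem_univ _, Finset.mem_range.mp hb⟩, rfl⟩
    rw [hcb, Finset.card_range]
  have heq : (Finset.univ.filter (fun j : Fin m =>
      (Finset.univ.filter (fun i => f i < f j)).card < k)) =
      (Finset.univ.filter (fun j : Fin m => (s j : ℕ) < k)) := rfl
  rw [heq, this, h2]

lemma card_filter_comp_perm {m : ℕ} (π : Equiv.Perm (Fin m)) (q : Fin m → Prop)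
    [DecidablePred q] :
    (Finset.univ.filter (fun i => q (π i))).card = (Finset.univ.filter q).card := by
  refine Finset.card_bij (fun i _ => π i) ?_ ?_ ?_
  · intro a ha
    exact Finset.mem_filter.mpr ⟨Finset.mem_univ _, (Finset.mem_filter.mp ha).2⟩
  · intro a _ b _ h; exact π.injective h
  · intro b hb
    refine ⟨π.symm b, ?_, by simp⟩
    refine Finset.mem_filter.mpr ⟨Finset.mem_univ _, ?_⟩
    simpa using (Finset.mem_filter.mp hb).2

lemma card_filter_castSucc {n : ℕ} (f : Fin (n + 1) → ℝ) :
    (Finset.univ.filter (fun i : Fin n => f i.castSucc < f (Fin.last n))).card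
      = (Finset.univ.filter (fun j : Fin (n + 1) => f j < f (Fin.last n))).card := by
  refine Finset.card_bij (fun i _ => i.castSucc) ?_ ?_ ?_
  · intro a ha
    exact Finset.mem_filter.mpr ⟨Finset.mem_univ _, (Finset.mem_filter.mp ha).2⟩
  · intro a _ b _ h; exact Fin.castSucc_injective n h
  · intro b hb
    have hlt : f b < f (Fin.last n) := (Finset.mem_filter.mp hb).2
    have hbne : b ≠ Fin.last n := by
      intro h; rw [h] at hlt; exact absurd hlt (lt_irrefl _)
    have hbv : (b : ℕ) < n := by
      have := b.isLt
      rcases Nat.lt_or_ge (b : ℕ) n with h | h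
      · exact h
      · exact absurd (Fin.ext (by omega : (b : ℕ) = n)) hbne
    exact ⟨⟨b, hbv⟩, Finset.mem_filter.mpr ⟨Finset.mem_univ _, by
      simpa [Fin.castSucc, Fin.ext_iff] using hlt⟩, by simp [Fin.ext_iff]⟩

/-- **Marginal coverage of weighted split conformal prediction (upper bound).**
Under the same setup as the lower bound, if in addition the scores
`R_1, …, R_{n+1}` are almost surely pairwise distinct, then
`P(R_{n+1} ≤ q̂) ≤ 1 − α + 1/(n+1)`. -/
theorem lwcp_marginal_coverage_upper
    {Ω : Type*} [MeasurableSpace Ω] (P : Measure Ω) [IsProbabilityMeasure P]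
    (p n : ℕ)
    (Z : Fin (n + 1) → Ω → (Fin p → ℝ) × ℝ)
    (hZmeas : ∀ i, Measurable (Z i))
    (hexch : ∀ π : Equiv.Perm (Fin (n + 1)),
      Measure.map (fun ω => fun i => Z (π i) ω) P
        = Measure.map (fun ω => fun i => Z i ω) P)
    (fhat : (Fin p → ℝ) → ℝ) (hf : Measurable fhat)
    (v : (Fin p → ℝ) → ℝ) (hv : Measurable v) (hvpos : ∀ x, 0 < v x)
    (α : ℝ) (hα : α ∈ Set.Ioo (0 : ℝ) 1)
    (hk : ⌈(1 - α) * ((n : ℝ) + 1)⌉₊ ≤ n)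
    (R : Fin (n + 1) → Ω → ℝ)
    (hR : ∀ i ω, R i ω = |(Z i ω).2 - fhat (Z i ω).1| * v (Z i ω).1)
    (hdistinct : ∀ᵐ ω ∂P, ∀ i j : Fin (n + 1), i ≠ j → R i ω ≠ R j ω)
    (qhat : Ω → ℝ)
    (hq : ∀ ω, qhat ω =
      kthSmallest (fun i : Fin n => R i.castSucc ω) ⌈(1 - α) * ((n : ℝ) + 1)⌉₊) :
    P {ω | R (Fin.last n) ω ≤ qhat ω}
      ≤ ENNReal.ofReal (1 - α + 1 / ((n : ℝ) + 1)) := by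
  classical
  obtain ⟨hα0, hα1⟩ := hα
  set k := ⌈(1 - α) * ((n : ℝ) + 1)⌉₊ with hkdef
  have hnpos : (0 : ℝ) < (n : ℝ) + 1 := by positivity
  have hk1 : 1 ≤ k := by
    rw [hkdef]
    exact Nat.one_le_iff_ne_zero.mpr (by
      have : 0 < (1 - α) * ((n : ℝ) + 1) := mul_pos (by linarith) hnpos
      simpa [Nat.pos_iff_ne_zero] using Nat.ceil_pos.mpr this)
  -- the score function
  set g : (Fin p → ℝ) × ℝ → ℝ := fun z => |z.2 - fhat z.1| * v z.1 with hgdef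
  have hg : Measurable g :=
    ((measurable_snd.sub (hf.comp measurable_fst)).abs).mul (hv.comp measurable_fst)
  have hRg : ∀ i, R i = fun ω => g (Z i ω) := fun i => funext fun ω => hR i ω
  have hRmeas : ∀ i, Measurable (R i) := fun i => by
    rw [hRg i]; exact hg.comp (hZmeas i)
  -- the rank events
  set E : Fin (n + 1) → Set Ω := fun j =>
    {ω | (Finset.univ.filter (fun i => R i ω < R j ω)).card < k} with hEdef
  have hEmeas : ∀ j, MeasurableSet (E j) := by
    intro j
    have hNm : Measurable (fun ω =>
        ∑ i : Fin (n + 1), if R i ω < R j ω then (1 : ℕ) else 0) := by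
      apply Finset.measurable_sum
      intro i _
      exact Measurable.ite (measurableSet_lt (hRmeas i) (hRmeas j))
        measurable_const measurable_const
    have : E j = (fun ω => ∑ i : Fin (n + 1), if R i ω < R j ω then (1 : ℕ) else 0) ⁻¹'
        (Set.Iio k) := by
      ext ω
      simp only [hEdef, Set.mem_setOf_eq, Set.mem_preimage, Set.mem_Iio]
      rw [Finset.card_filter]
    rw [this]
    exact hNm measurableSet_Iio
  -- corresponding events in the product space
  set B : Fin (n + 1) → Set (Fin (n + 1) → (Fin p → ℝ) × ℝ) := fun j =>
    {w | (Finset.univ.filter (fun i => g (w i) < g (w j))).card < k} with hBdef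
  have hBmeas : ∀ j, MeasurableSet (B j) := by
    intro j
    have hNm : Measurable (fun w : Fin (n + 1) → (Fin p → ℝ) × ℝ =>
        ∑ i : Fin (n + 1), if g (w i) < g (w j) then (1 : ℕ) else 0) := by
      apply Finset.measurable_sum
      intro i _
      exact Measurable.ite
        (measurableSet_lt (hg.comp (measurable_pi_apply i)) (hg.comp (measurable_pi_apply j)))
        measurable_const measurable_const
    have : B j = (fun w : Fin (n + 1) → (Fin p → ℝ) × ℝ =>
        ∑ i : Fin (n + 1), if g (w i) < g (w j) then (1 : ℕ) else 0) ⁻¹' (Set.Iio k) := by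
      ext w
      simp only [hBdef, Set.mem_setOf_eq, Set.mem_preimage, Set.mem_Iio]
      rw [Finset.card_filter]
    rw [this]
    exact hNm measurableSet_Iio
  -- preimage identity
  have hpre : ∀ (π : Equiv.Perm (Fin (n + 1))) (j : Fin (n + 1)),
      (fun ω => fun i => Z (π i) ω) ⁻¹' (B j) = E (π j) := by
    intro π j
    ext ω
    simp only [hBdef, hEdef, Set.mem_preimage, Set.mem_setOf_eq]
    have hcard : (Finset.univ.filter (fun i => g (Z (π i) ω) < g (Z (π j) ω))).card
        = (Finset.univ.filter (fun i => g (Z i ω) < g (Z (π j) ω))).card :=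
      card_filter_comp_perm π (fun i => g (Z i ω) < g (Z (π j) ω))
    rw [hcard]
    have : ∀ i, R i ω = g (Z i ω) := fun i => hR i ω
    simp_rw [this]
  have hZvecm : Measurable (fun ω => fun i : Fin (n + 1) => Z i ω) :=
    measurable_pi_lambda _ hZmeas
  -- all events have the same probability
  have hsameprob : ∀ j, P (E j) = P (E (Fin.last n)) := by
    intro j
    set π := Equiv.swap j (Fin.last n) with hπ
    have hπlast : π (Fin.last n) = j := Equiv.swap_apply_right _ _
    have hZπm : Measurable (fun ω => fun i : Fin (n + 1) => Z (π i) ω) :=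
      measurable_pi_lambda _ (fun i => hZmeas (π i))
    have h1 : P (E j) = Measure.map (fun ω => fun i => Z (π i) ω) P (B (Fin.last n)) := by
      rw [Measure.map_apply hZπm (hBmeas (Fin.last n)), hpre π (Fin.last n), hπlast]
    have h2 : Measure.map (fun ω => fun i : Fin (n+1) => Z i ω) P (B (Fin.last n))
        = P (E (Fin.last n)) := by
      rw [Measure.map_apply hZvecm (hBmeas (Fin.last n))]
      have h3 := hpre (Equiv.refl (Fin (n + 1))) (Fin.last n)
      simp only [Equiv.refl_apply] at h3
      rw [h3]
    rw [h1, hexch π, h2]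
  -- sum of probabilities equals k
  have hsum : ∑ j : Fin (n + 1), P (E j) = (k : ℝ≥0∞) := by
    have h1 : ∀ j, P (E j) = ∫⁻ ω, (E j).indicator (fun _ => (1 : ℝ≥0∞)) ω ∂P := by
      intro j
      rw [lintegral_indicator (hEmeas j)]
      simp
    calc ∑ j : Fin (n + 1), P (E j)
        = ∑ j : Fin (n + 1), ∫⁻ ω, (E j).indicator (fun _ => (1 : ℝ≥0∞)) ω ∂P := by
          exact Finset.sum_congr rfl (fun j _ => h1 j)
      _ = ∫⁻ ω, ∑ j : Fin (n + 1), (E j).indicator (fun _ => (1 : ℝ≥0∞)) ω ∂P := by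
          rw [lintegral_finset_sum]
          intro j _
          exact (measurable_const.indicator (hEmeas j))
      _ = ∫⁻ _, (k : ℝ≥0∞) ∂P := by
          apply lintegral_congr_ae
          filter_upwards [hdistinct] with ω hω
          have hfinj : Function.Injective (fun i => R i ω) := by
            intro a b hab
            by_contra hne
            exact hω a b hne hab
          have hcount := rank_count (fun i => R i ω) hfinj (by omega : k ≤ n + 1)
          have : ∀ j, (E j).indicator (fun _ => (1 : ℝ≥0∞)) ω
              = if (Finset.univ.filter (fun i => R i ω < R j ω)).card < k then 1 else 0 := by
            intro j
            by_cases hj : ω ∈ E j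
            · rw [Set.indicator_of_mem hj]
              simp only [hEdef, Set.mem_setOf_eq] at hj
              rw [if_pos hj]
            · rw [Set.indicator_of_notMem hj]
              simp only [hEdef, Set.mem_setOf_eq] at hj
              rw [if_neg hj]
          simp_rw [this]
          rw [Finset.sum_boole]
          rw [hcount]
      _ = (k : ℝ≥0∞) := by
          rw [lintegral_const, measure_univ, mul_one]
  -- probability of the last event
  have hlastprob : ((n : ℝ≥0∞) + 1) * P (E (Fin.last n)) = (k : ℝ≥0∞) := by
    have : ∑ j : Fin (n + 1), P (E j) = ∑ _j : Fin (n + 1), P (E (Fin.last n)) :=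
      Finset.sum_congr rfl (fun j _ => hsameprob j)
    rw [this, Finset.sum_const, Finset.card_univ, Fintype.card_fin] at hsum
    rw [← hsum]
    simp [nsmul_eq_mul]
  -- the coverage event is a.e. contained in E (last)
  have hsubset : ∀ᵐ ω ∂P, ω ∈ {ω | R (Fin.last n) ω ≤ qhat ω} → ω ∈ E (Fin.last n) := by
    filter_upwards [hdistinct] with ω hω hmem
    rw [hq ω] at hmem
    have hlt := (le_kthSmallest_iff (fun i : Fin n => R i.castSucc ω) hk1 hk
      (R (Fin.last n) ω)).mp hmem
    have hcc := card_filter_castSucc (fun i => R i ω)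
    simp only [hEdef, Set.mem_setOf_eq]
    rw [← hcc]
    exact hlt
  have hPle : P {ω | R (Fin.last n) ω ≤ qhat ω} ≤ P (E (Fin.last n)) := by
    apply measure_mono_ae
    exact hsubset
  refine le_trans hPle ?_
  -- compute P (E last) = k / (n+1) and compare
  have hne0 : ((n : ℝ≥0∞) + 1) ≠ 0 := by simp
  have hnetop : ((n : ℝ≥0∞) + 1) ≠ ⊤ := by simp
  have hPlast : P (E (Fin.last n)) = (k : ℝ≥0∞) / ((n : ℝ≥0∞) + 1) :=
    (ENNReal.eq_div_iff hne0 hnetop).mpr hlastprob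
  rw [hPlast]
  have hreal : (k : ℝ) / ((n : ℝ) + 1) ≤ 1 - α + 1 / ((n : ℝ) + 1) := by
    have hceil : (k : ℝ) < (1 - α) * ((n : ℝ) + 1) + 1 := by
      rw [hkdef]
      exact Nat.ceil_lt_add_one (le_of_lt (mul_pos (by linarith) hnpos))
    rw [div_le_iff₀ hnpos]
    have : (1 - α + 1 / ((n : ℝ) + 1)) * ((n : ℝ) + 1)
        = (1 - α) * ((n : ℝ) + 1) + 1 := by
      field_simp
    rw [this]
    linarith
  calc (k : ℝ≥0∞) / ((n : ℝ≥0∞) + 1)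
      = ENNReal.ofReal ((k : ℝ) / ((n : ℝ) + 1)) := by
        rw [ENNReal.ofReal_div_of_pos hnpos]
        congr 1
        · exact (ENNReal.ofReal_natCast k).symm
        · rw [ENNReal.ofReal_add (by positivity) (by norm_num)]
          simp [ENNReal.ofReal_natCast]
    _ ≤ ENNReal.ofReal (1 - α + 1 / ((n : ℝ) + 1)) := ENNReal.ofReal_le_ofReal hreal
end

section
/- Let (X_i, Y_i), i = 1, ..., n+1, be exchangeable random pairs in ℝ^p × ℝ, let f̂ : ℝ^p → ℝ be a fixed measurable function, let w_1, ..., w_K : ℝ^p → (0, ∞) be fixed measurable candidate weight functions, and let κ be a random index in {1, ..., K} that is independent of ((X_1, Y_1), ..., (X_{n+1}, Y_{n+1})). Define scores R_i = |Y_i − f̂(X_i)| · w_κ(X_i). Let α ∈ (0,1) satisfy ⌈(1−α)(n+1)⌉ ≤ n and let q̂ be the ⌈(1−α)(n+1)⌉-th smallest value among R_1, ..., R_n. Then P(R_{n+1} ≤ q̂) ≥ 1 − α; i.e., data-driven weight selection using data independent of the calibration and test points preserves marginal coverage exactly. -/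
open MeasureTheory ProbabilityTheory
open scoped ENNReal

lemma le_kthSmallest {n : ℕ} (R : Fin n → ℝ) (k : ℕ) (hk : k ≤ n) (r : ℝ)
    (h : (Finset.univ.filter (fun i => R i < r)).card < k) :
    r ≤ kthSmallest R k := by
  have hk1 : 1 ≤ k := by
    rcases Nat.eq_zero_or_pos k with h0 | h1
    · simp [h0] at h
    · exact h1
  have hn : 0 < n := lt_of_lt_of_le hk1 hk
  apply le_csInf
  · have hne : (Finset.univ.image R).Nonempty := by
      simp [Finset.image_nonempty, Finset.univ_nonempty_iff, Fin.pos_iff_nonempty.mp hn]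
    refine ⟨(Finset.univ.image R).max' hne, ?_⟩
    have : (Finset.univ.filter (fun i => R i ≤ (Finset.univ.image R).max' hne)) = Finset.univ := by
      apply Finset.filter_true_of_mem
      intro i _
      exact Finset.le_max' _ _ (Finset.mem_image_of_mem R (Finset.mem_univ i))
    simp only [Set.mem_setOf_eq, this, Finset.card_univ, Fintype.card_fin]
    exact hk
  · intro t ht
    by_contra hlt
    push_neg at hlt
    have hsub : (Finset.univ.filter (fun i => R i ≤ t)) ⊆
        (Finset.univ.filter (fun i => R i < r)) := by
      intro i hi
      simp only [Finset.mem_filter] at hi ⊢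
      exact ⟨hi.1, lt_of_le_of_lt hi.2 hlt⟩
    have := Finset.card_le_card hsub
    simp only [Set.mem_setOf_eq] at ht
    omega

lemma count_small {m : ℕ} (r : Fin m → ℝ) (k : ℕ) (hk : k ≤ m) :
    k ≤ (Finset.univ.filter fun j => (Finset.univ.filter fun i => r i < r j).card < k).card := by
  classical
  set σ := Tuple.sort r with hσ
  have hmono : Monotone (r ∘ σ) := Tuple.monotone_sort r
  have hmem : ∀ m' : Fin m, (m' : ℕ) < k →
      (Finset.univ.filter fun i => r i < r (σ m')).card < k := by
    intro m' hm'
    have hcard : (Finset.univ.filter fun i => r i < r (σ m')).card ≤ (m' : ℕ) := by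
      have hinj : Set.InjOn (fun i => σ⁻¹ i)
          ((Finset.univ.filter fun i => r i < r (σ m')) : Finset (Fin m)) := by
        intro a _ b _ hab
        simpa using congrArg σ hab
      have hmaps : ∀ i ∈ (Finset.univ.filter fun i => r i < r (σ m')),
          σ⁻¹ i ∈ Finset.Iio m' := by
        intro i hi
        simp only [Finset.mem_filter] at hi
        simp only [Finset.mem_Iio]
        by_contra hge
        push_neg at hge
        have := hmono hge
        simp only [Function.comp_apply] at this
        rw [show σ (σ⁻¹ i) = i from σ.apply_symm_apply i] at this; exact absurd hi.2 (not_lt.mpr this)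
      calc (Finset.univ.filter fun i => r i < r (σ m')).card
          ≤ (Finset.Iio m').card := Finset.card_le_card_of_injOn _ hmaps hinj
        _ = (m' : ℕ) := Fin.card_Iio m'
    omega
  have hsrc : (Finset.univ.filter fun m' : Fin m => (m' : ℕ) < k).card = k := by
    rcases Nat.lt_or_ge k m with hlt | hge
    · have : (Finset.univ.filter fun m' : Fin m => (m' : ℕ) < k) = Finset.Iio ⟨k, hlt⟩ := by
        ext x; simp [Finset.mem_Iio, Fin.lt_def]
      rw [this]; exact Fin.card_Iio _
    · have hkm : k = m := le_antisymm hk hge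
      subst hkm
      have : (Finset.univ.filter fun m' : Fin k => (m' : ℕ) < k) = Finset.univ := by
        apply Finset.filter_true_of_mem; intro i _; exact i.isLt
      simp [this]
  calc k = (Finset.univ.filter fun m' : Fin m => (m' : ℕ) < k).card := hsrc.symm
    _ ≤ _ := by
        apply Finset.card_le_card_of_injOn σ
        · intro m' hm'
          simp only [Finset.mem_coe, Finset.mem_filter, Finset.mem_univ, true_and] at hm' ⊢
          exact hmem m' hm'
        · intro a _ b _ hab
          exact σ.injective hab

/-- **Coverage under data-driven weight selection.** For exchangeable pairs
`(X_i, Y_i)`, a fixed measurable predictor `f̂`, fixed measurable positive candidate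
weights `w_1, …, w_K`, and a random index `κ` independent of the data, the conformal
procedure with scores `R_i = |Y_i − f̂(X_i)|·w_κ(X_i)` still satisfies
`P(R_{n+1} ≤ q̂) ≥ 1 − α`. -/
theorem coverage_data_driven_weight_selection
    {Ω : Type*} [MeasurableSpace Ω] (P : Measure Ω) [IsProbabilityMeasure P]
    (p n K : ℕ)
    (Z : Fin (n + 1) → Ω → (Fin p → ℝ) × ℝ)
    (hZmeas : ∀ i, Measurable (Z i))
    (hexch : ∀ π : Equiv.Perm (Fin (n + 1)),
      Measure.map (fun ω => fun i => Z (π i) ω) P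
        = Measure.map (fun ω => fun i => Z i ω) P)
    (fhat : (Fin p → ℝ) → ℝ) (hf : Measurable fhat)
    (w : Fin K → (Fin p → ℝ) → ℝ)
    (hw : ∀ k, Measurable (w k)) (hwpos : ∀ k x, 0 < w k x)
    (κ : Ω → Fin K) (hκmeas : Measurable κ)
    (hκindep : IndepFun κ (fun ω => fun i => Z i ω) P)
    (α : ℝ) (hα : α ∈ Set.Ioo (0 : ℝ) 1)
    (hk : ⌈(1 - α) * ((n : ℝ) + 1)⌉₊ ≤ n)
    (R : Fin (n + 1) → Ω → ℝ)
    (hR : ∀ i ω, R i ω = |(Z i ω).2 - fhat (Z i ω).1| * w (κ ω) (Z i ω).1)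
    (qhat : Ω → ℝ)
    (hq : ∀ ω, qhat ω =
      kthSmallest (fun i : Fin n => R i.castSucc ω) ⌈(1 - α) * ((n : ℝ) + 1)⌉₊) :
    ENNReal.ofReal (1 - α) ≤ P {ω | R (Fin.last n) ω ≤ qhat ω} := by
  classical
  obtain ⟨hα0, hα1⟩ := hα
  set k := ⌈(1 - α) * ((n : ℝ) + 1)⌉₊ with hkdef
  have hk1 : 1 ≤ k := by
    rw [hkdef]
    exact Nat.one_le_ceil_iff.mpr (mul_pos (by linarith) (by positivity))
  -- the data vector
  set Zvec : Ω → (Fin (n + 1) → (Fin p → ℝ) × ℝ) := fun ω => fun i => Z i ω with hZvecdef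
  have hZvecMeas : Measurable Zvec := measurable_pi_lambda _ hZmeas
  set μ := P.map Zvec with hμdef
  set ν := P.map κ with hνdef
  haveI : IsProbabilityMeasure μ := Measure.isProbabilityMeasure_map hZvecMeas.aemeasurable
  haveI : IsProbabilityMeasure ν := Measure.isProbabilityMeasure_map hκmeas.aemeasurable
  -- the score function on the canonical space
  set s : Fin (n + 1) → (Fin K × (Fin (n + 1) → (Fin p → ℝ) × ℝ)) → ℝ :=
    fun i q => |(q.2 i).2 - fhat (q.2 i).1| * w q.1 (q.2 i).1 with hsdef
  have hsMeas : ∀ i, Measurable (s i) := by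
    intro i
    have h1 : Measurable fun q : Fin K × (Fin (n + 1) → (Fin p → ℝ) × ℝ) => q.2 i :=
      (measurable_pi_apply i).comp measurable_snd
    have habs : Measurable fun q : Fin K × (Fin (n + 1) → (Fin p → ℝ) × ℝ) =>
        |(q.2 i).2 - fhat (q.2 i).1| :=
      ((measurable_snd.comp h1).sub (hf.comp (measurable_fst.comp h1))).abs
    have hw2 : Measurable fun q : (Fin p → ℝ) × Fin K => w q.2 q.1 :=
      measurable_from_prod_countable_left fun c => hw c
    have hwq : Measurable fun q : Fin K × (Fin (n + 1) → (Fin p → ℝ) × ℝ) =>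
        w q.1 (q.2 i).1 :=
      hw2.comp ((measurable_fst.comp h1).prodMk measurable_fst)
    exact habs.mul hwq
  -- the "low rank" events
  set B : Fin (n + 1) → Set (Fin K × (Fin (n + 1) → (Fin p → ℝ) × ℝ)) := fun j =>
    {q | (Finset.univ.filter fun i => s i q < s j q).card < k} with hBdef
  have hBmeas : ∀ j, MeasurableSet (B j) := by
    intro j
    have hN : Measurable fun q : Fin K × (Fin (n + 1) → (Fin p → ℝ) × ℝ) =>
        (Finset.univ.filter fun i => s i q < s j q).card := by
      simp_rw [Finset.card_filter]
      apply Finset.measurable_sum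
      intro i _
      exact Measurable.ite (measurableSet_lt (hsMeas i) (hsMeas j))
        measurable_const measurable_const
    have hBpre : B j = (fun q : Fin K × (Fin (n + 1) → (Fin p → ℝ) × ℝ) =>
        (Finset.univ.filter fun i => s i q < s j q).card) ⁻¹' Set.Iio k := rfl
    rw [hBpre]
    exact hN trivial
  -- joint map and independence
  set Φ : Ω → Fin K × (Fin (n + 1) → (Fin p → ℝ) × ℝ) := fun ω => (κ ω, Zvec ω) with hΦdef
  have hΦmeas : Measurable Φ := hκmeas.prodMk hZvecMeas
  have hmapΦ : P.map Φ = ν.prod μ :=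
    (indepFun_iff_map_prod_eq_prod_map_map hκmeas.aemeasurable
      hZvecMeas.aemeasurable).mp hκindep
  -- exchangeability on the canonical space
  have hinv : ∀ π : Equiv.Perm (Fin (n + 1)),
      Measure.map (fun z : Fin (n + 1) → (Fin p → ℝ) × ℝ => fun i => z (π i)) μ = μ := by
    intro π
    have hmeasπ : Measurable fun z : Fin (n + 1) → (Fin p → ℝ) × ℝ => fun i => z (π i) :=
      measurable_pi_lambda _ fun i => measurable_pi_apply (π i)
    rw [hμdef, Measure.map_map hmeasπ hZvecMeas]
    exact hexch π
  -- all B j have the same probability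
  have hBeq : ∀ j, (ν.prod μ) (B j) = (ν.prod μ) (B (Fin.last n)) := by
    intro j
    set π := Equiv.swap j (Fin.last n) with hπdef
    have hg : Measurable fun z : Fin (n + 1) → (Fin p → ℝ) × ℝ => fun i => z (π i) :=
      measurable_pi_lambda _ fun i => measurable_pi_apply (π i)
    have hT : Measurable (Prod.map (id : Fin K → Fin K)
        (fun z : Fin (n + 1) → (Fin p → ℝ) × ℝ => fun i => z (π i))) :=
      measurable_id.prodMap hg
    have hprod : Measure.map (Prod.map (id : Fin K → Fin K)
        (fun z : Fin (n + 1) → (Fin p → ℝ) × ℝ => fun i => z (π i))) (ν.prod μ) = ν.prod μ := by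
      rw [← Measure.map_prod_map _ _ measurable_id hg, Measure.map_id, hinv π]
    have hpre : (Prod.map (id : Fin K → Fin K)
        (fun z : Fin (n + 1) → (Fin p → ℝ) × ℝ => fun i => z (π i))) ⁻¹' (B (Fin.last n))
        = B j := by
      ext q
      simp only [hBdef, Set.mem_preimage, Set.mem_setOf_eq, Prod.map, id_eq]
      have hsc : ∀ i, s i (q.1, fun i' => q.2 (π i')) = s (π i) q := fun i => rfl
      have hcount : (Finset.univ.filter fun i =>
            s i (q.1, fun i' => q.2 (π i')) < s (Fin.last n) (q.1, fun i' => q.2 (π i'))).card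
          = (Finset.univ.filter fun i => s i q < s j q).card := by
        simp_rw [hsc, Finset.card_filter]
        have hlast : π (Fin.last n) = j := Equiv.swap_apply_right j (Fin.last n)
        simp only [hlast]
        exact Equiv.sum_comp π (fun i => if s i q < s j q then 1 else 0)
      rw [hcount]
    calc (ν.prod μ) (B j)
        = (ν.prod μ) ((Prod.map (id : Fin K → Fin K)
            (fun z : Fin (n + 1) → (Fin p → ℝ) × ℝ => fun i => z (π i))) ⁻¹' (B (Fin.last n)))
          := by rw [hpre]
      _ = (Measure.map (Prod.map (id : Fin K → Fin K)
            (fun z : Fin (n + 1) → (Fin p → ℝ) × ℝ => fun i => z (π i))) (ν.prod μ))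
            (B (Fin.last n)) := (Measure.map_apply hT (hBmeas _)).symm
      _ = (ν.prod μ) (B (Fin.last n)) := by rw [hprod]
  -- sum lower bound
  have hsum : (k : ℝ≥0∞) ≤ ∑ j : Fin (n + 1), (ν.prod μ) (B j) := by
    have hpt : ∀ q, (k : ℝ≥0∞)
        ≤ ∑ j : Fin (n + 1), (B j).indicator (fun _ => (1 : ℝ≥0∞)) q := by
      intro q
      have hcount := count_small (fun i => s i q) k (by omega)
      have : ∑ j : Fin (n + 1), (B j).indicator (fun _ => (1 : ℝ≥0∞)) q
          = ((Finset.univ.filter fun j =>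
              (Finset.univ.filter fun i => s i q < s j q).card < k).card : ℝ≥0∞) := by
        rw [Finset.card_filter]
        push_cast
        apply Finset.sum_congr rfl
        intro j _
        by_cases hj : q ∈ B j
        · have hj' : (Finset.univ.filter fun i => s i q < s j q).card < k := hj
          simp [Set.indicator_of_mem hj, hj']
        · have hj' : ¬ (Finset.univ.filter fun i => s i q < s j q).card < k := hj
          simp [Set.indicator_of_notMem hj, hj']
      rw [this]
      exact_mod_cast hcount
    calc (k : ℝ≥0∞) = ∫⁻ _, (k : ℝ≥0∞) ∂(ν.prod μ) := by simp
      _ ≤ ∫⁻ q, ∑ j : Fin (n + 1), (B j).indicator (fun _ => (1 : ℝ≥0∞)) q ∂(ν.prod μ) :=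
          lintegral_mono hpt
      _ = ∑ j : Fin (n + 1), ∫⁻ q, (B j).indicator (fun _ => (1 : ℝ≥0∞)) q ∂(ν.prod μ) :=
          lintegral_finset_sum _ fun j _ => (measurable_const.indicator (hBmeas j))
      _ = ∑ j : Fin (n + 1), (ν.prod μ) (B j) := by
          refine Finset.sum_congr rfl fun j _ => ?_
          rw [lintegral_indicator (hBmeas j)]
          simp
  have hineq : (k : ℝ≥0∞) ≤ ((n : ℝ≥0∞) + 1) * (ν.prod μ) (B (Fin.last n)) := by
    calc (k : ℝ≥0∞) ≤ ∑ j : Fin (n + 1), (ν.prod μ) (B j) := hsum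
      _ = ∑ _j : Fin (n + 1), (ν.prod μ) (B (Fin.last n)) :=
          Finset.sum_congr rfl fun j _ => hBeq j
      _ = ((n : ℝ≥0∞) + 1) * (ν.prod μ) (B (Fin.last n)) := by
          rw [Finset.sum_const, Finset.card_univ, Fintype.card_fin, nsmul_eq_mul]
          push_cast
          ring
  -- from the key probability to the coverage event
  have hfinal : ENNReal.ofReal (1 - α) ≤ (ν.prod μ) (B (Fin.last n)) := by
    have hne0 : ((n : ℝ≥0∞) + 1) ≠ 0 := (lt_of_lt_of_le zero_lt_one le_add_self).ne'
    have hnetop : ((n : ℝ≥0∞) + 1) ≠ ⊤ :=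
      ENNReal.add_ne_top.mpr ⟨ENNReal.natCast_ne_top n, ENNReal.one_ne_top⟩
    rw [← ENNReal.mul_le_mul_iff_right (a := (n : ℝ≥0∞) + 1) hne0 hnetop]
    calc ((n : ℝ≥0∞) + 1) * ENNReal.ofReal (1 - α)
        = ENNReal.ofReal ((1 - α) * ((n : ℝ) + 1)) := by
          rw [ENNReal.ofReal_mul (by linarith)]
          rw [ENNReal.ofReal_add (by positivity) (by norm_num), ENNReal.ofReal_natCast,
            ENNReal.ofReal_one]
          ring
      _ ≤ (k : ℝ≥0∞) := by
          rw [← ENNReal.ofReal_natCast k]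
          exact ENNReal.ofReal_le_ofReal (Nat.le_ceil _)
      _ ≤ ((n : ℝ≥0∞) + 1) * (ν.prod μ) (B (Fin.last n)) := hineq
  -- containment
  have hcov : Φ ⁻¹' (B (Fin.last n)) ⊆ {ω | R (Fin.last n) ω ≤ qhat ω} := by
    intro ω hω
    simp only [hBdef, Set.mem_preimage, Set.mem_setOf_eq] at hω
    have hRs : ∀ i, R i ω = s i (Φ ω) := fun i => hR i ω
    simp only [Set.mem_setOf_eq, hq ω]
    apply le_kthSmallest _ k hk
    have hsub : (Finset.univ.filter fun i : Fin n =>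
          R i.castSucc ω < R (Fin.last n) ω).card
        ≤ (Finset.univ.filter fun i : Fin (n + 1) => s i (Φ ω) < s (Fin.last n) (Φ ω)).card := by
      apply Finset.card_le_card_of_injOn Fin.castSucc
      · intro i hi
        simp only [Finset.mem_coe, Finset.mem_filter, Finset.mem_univ, true_and] at hi ⊢
        rw [← hRs i.castSucc, ← hRs (Fin.last n)]
        exact hi
      · intro a _ b _ hab
        exact Fin.castSucc_injective n hab
    exact lt_of_le_of_lt hsub hω
  calc ENNReal.ofReal (1 - α) ≤ (ν.prod μ) (B (Fin.last n)) := hfinal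
    _ = P (Φ ⁻¹' (B (Fin.last n))) := by
        rw [← hmapΦ, Measure.map_apply hΦmeas (hBmeas _)]
    _ ≤ P {ω | R (Fin.last n) ω ≤ qhat ω} := measure_mono hcov
end
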